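/- Let n ≥ 2 and let P be an n×n column stochastic matrix with P_{jj} > 0 for all j and such that for every pair (j, i) there exists m ≥ 1 with (P^m)_{ji} > 0. Let y and z both evolve by y[k+1] = P y[k] and z[k+1] = P z[k] with initial conditions y[0] = y₀ ∈ ℝⁿ and z[0] = 𝟙 (the all-ones vector). Then z_j[k] > 0 for all j and k, and for every j, the ratio μ_j[k] = y_j[k] / z_j[k] converges as k → ∞ to (Σ_{l=1}^n y₀(l)) / n. -/

import Mathlib

open Matrix Filter

/-- An `n × n` real matrix is column stochastic if all entries are nonnegative and
each column sums to `1`. -/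
def ColStoch {N : Type*} [Fintype N] (A : Matrix N N ℝ) : Prop :=
  (∀ j i, 0 ≤ A j i) ∧ ∀ i, ∑ j, A j i = 1

section Aux

variable {n : ℕ}

lemma ColStoch.mul' {A B : Matrix (Fin n) (Fin n) ℝ} (hA : ColStoch A) (hB : ColStoch B) :
    ColStoch (A * B) := by
  constructor
  · intro j i
    rw [Matrix.mul_apply]
    exact Finset.sum_nonneg fun k _ => mul_nonneg (hA.1 j k) (hB.1 k i)
  · intro i
    simp only [Matrix.mul_apply]
    rw [Finset.sum_comm]
    calc ∑ k, ∑ j, A j k * B k i = ∑ k, B k i := by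
          refine Finset.sum_congr rfl fun k _ => ?_
          rw [← Finset.sum_mul, hA.2 k, one_mul]
      _ = 1 := hB.2 i

lemma ColStoch.pow' {P : Matrix (Fin n) (Fin n) ℝ} (hP : ColStoch P) (m : ℕ) :
    ColStoch (P ^ m) := by
  induction m with
  | zero =>
      constructor
      · intro j i
        simp [Matrix.one_apply]
        split <;> norm_num
      · intro i
        simp [Matrix.one_apply]
  | succ m ih =>
      rw [pow_succ]
      exact ih.mul' hP

lemma sum_mulVec_colStoch {A : Matrix (Fin n) (Fin n) ℝ} (hA : ColStoch A) (x : Fin n → ℝ) :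
    ∑ j, A.mulVec x j = ∑ i, x i := by
  simp only [Matrix.mulVec, dotProduct]
  rw [Finset.sum_comm]
  refine Finset.sum_congr rfl fun i _ => ?_
  rw [← Finset.sum_mul, hA.2 i, one_mul]

lemma norm1_mulVec_le {A : Matrix (Fin n) (Fin n) ℝ} (hA : ColStoch A) (x : Fin n → ℝ) :
    ∑ j, |A.mulVec x j| ≤ ∑ i, |x i| := by
  calc ∑ j, |A.mulVec x j| ≤ ∑ j, ∑ i, A j i * |x i| := by
        refine Finset.sum_le_sum fun j _ => ?_
        calc |A.mulVec x j| = |∑ i, A j i * x i| := rfl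
          _ ≤ ∑ i, |A j i * x i| := Finset.abs_sum_le_sum_abs _ _
          _ = ∑ i, A j i * |x i| := by
              refine Finset.sum_congr rfl fun i _ => ?_
              rw [abs_mul, abs_of_nonneg (hA.1 j i)]
    _ = ∑ i, |x i| := by
        rw [Finset.sum_comm]
        refine Finset.sum_congr rfl fun i _ => ?_
        rw [← Finset.sum_mul, hA.2 i, one_mul]

lemma norm1_mulVec_contract {A : Matrix (Fin n) (Fin n) ℝ} (hA : ColStoch A) {ε : ℝ}
    (hε : ∀ j i, ε ≤ A j i) (x : Fin n → ℝ) (hx : ∑ i, x i = 0) :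
    ∑ j, |A.mulVec x j| ≤ (1 - n * ε) * ∑ i, |x i| := by
  have key : ∀ j, A.mulVec x j = ∑ i, (A j i - ε) * x i := by
    intro j
    have : ∑ i, (A j i - ε) * x i = ∑ i, A j i * x i - ε * ∑ i, x i := by
      rw [Finset.mul_sum, ← Finset.sum_sub_distrib]
      refine Finset.sum_congr rfl fun i _ => by ring
    rw [this, hx, mul_zero, sub_zero]
    rfl
  calc ∑ j, |A.mulVec x j| ≤ ∑ j, ∑ i, (A j i - ε) * |x i| := by
        refine Finset.sum_le_sum fun j _ => ?_
        rw [key j]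
        calc |∑ i, (A j i - ε) * x i| ≤ ∑ i, |(A j i - ε) * x i| :=
              Finset.abs_sum_le_sum_abs _ _
          _ = ∑ i, (A j i - ε) * |x i| := by
              refine Finset.sum_congr rfl fun i _ => ?_
              rw [abs_mul, abs_of_nonneg (sub_nonneg.2 (hε j i))]
    _ = (1 - n * ε) * ∑ i, |x i| := by
        rw [Finset.sum_comm, Finset.mul_sum]
        refine Finset.sum_congr rfl fun i _ => ?_
        rw [← Finset.sum_mul]
        congr 1
        rw [Finset.sum_sub_distrib, hA.2 i, Finset.sum_const, Finset.card_univ,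
          Fintype.card_fin, nsmul_eq_mul]

/-- Evolution: iterating `k ↦ P.mulVec` is multiplication by powers. -/
lemma evolve_pow {P : Matrix (Fin n) (Fin n) ℝ} {x : ℕ → Fin n → ℝ}
    (hx : ∀ k, x (k + 1) = P.mulVec (x k)) (m k : ℕ) :
    x (k + m) = (P ^ m).mulVec (x k) := by
  induction m with
  | zero => simp
  | succ m ih =>
      have : k + (m + 1) = (k + m) + 1 := by ring
      rw [this, hx, ih, pow_succ', ← Matrix.mulVec_mulVec]

end Aux

theorem statement3 (n : ℕ) (hn : 2 ≤ n)
    (P : Matrix (Fin n) (Fin n) ℝ) (hP : ColStoch P)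
    (hdiag : ∀ j, 0 < P j j)
    (hirr : ∀ j i : Fin n, ∃ m : ℕ, 1 ≤ m ∧ 0 < (P ^ m) j i)
    (y z : ℕ → Fin n → ℝ) (y0 : Fin n → ℝ)
    (hy0 : y 0 = y0) (hz0 : ∀ j, z 0 j = 1)
    (hy : ∀ k, y (k + 1) = P.mulVec (y k))
    (hz : ∀ k, z (k + 1) = P.mulVec (z k)) :
    (∀ k j, 0 < z k j) ∧
      ∀ j, Tendsto (fun k => y k j / z k j) atTop (nhds ((∑ l, y0 l) / (n : ℝ))) := by
  have hn0 : 0 < n := lt_of_lt_of_le (by norm_num) hn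
  have hnR : (0:ℝ) < n := by exact_mod_cast hn0
  -- positivity of z
  have hzpos : ∀ k j, 0 < z k j := by
    intro k
    induction k with
    | zero => intro j; rw [hz0 j]; norm_num
    | succ k ih =>
        intro j
        rw [hz k]
        have h1 : P j j * z k j ≤ ∑ i, P j i * z k i := by
          refine Finset.single_le_sum (fun i _ => mul_nonneg (hP.1 j i) (ih i).le)
            (Finset.mem_univ j)
        exact lt_of_lt_of_le (mul_pos (hdiag j) (ih j)) h1
  refine ⟨hzpos, ?_⟩
  -- sum of z is n
  have hzsum : ∀ k, ∑ i, z k i = n := by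
    intro k
    induction k with
    | zero => simp [hz0]
    | succ k ih => rw [hz k, sum_mulVec_colStoch hP, ih]
  -- entrywise positivity of high powers is monotone in the exponent
  have hmono : ∀ j i m, 0 < (P ^ m) j i → ∀ m', m ≤ m' → 0 < (P ^ m') j i := by
    intro j i m hm m' hmm'
    induction m' with
    | zero => exact (Nat.le_zero.mp hmm') ▸ hm
    | succ m' ih =>
        rcases Nat.lt_or_ge m (m' + 1) with h | h
        · have hm' : m ≤ m' := Nat.lt_succ_iff.mp h
          have hpos : 0 < (P ^ m') j i := ih hm'
          rw [pow_succ']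
          have h1 : P j j * (P ^ m') j i ≤ ∑ k, P j k * (P ^ m') k i :=
            Finset.single_le_sum
              (fun k _ => mul_nonneg (hP.1 j k) ((hP.pow' m').1 k i)) (Finset.mem_univ j)
          exact lt_of_lt_of_le (mul_pos (hdiag j) hpos) h1
        · have : m = m' + 1 := le_antisymm hmm' h
          exact this ▸ hm
  -- uniform power M with all entries positive
  choose mexp hmexp1 hmexp2 using hirr
  set M : ℕ := Finset.univ.sup (fun p : Fin n × Fin n => mexp p.1 p.2) with hM
  have hMvals : ∀ j i, mexp j i ≤ M := fun j i =>
    Finset.le_sup (f := fun p : Fin n × Fin n => mexp p.1 p.2) (Finset.mem_univ (j, i))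
  have hM1 : 1 ≤ M := by
    have i0 : Fin n := ⟨0, hn0⟩
    exact le_trans (hmexp1 i0 i0) (hMvals i0 i0)
  have hQpos : ∀ j i, 0 < (P ^ M) j i := fun j i =>
    hmono j i (mexp j i) (hmexp2 j i) M (hMvals j i)
  have hQ : ColStoch (P ^ M) := hP.pow' M
  -- ε
  have hne : (Finset.univ : Finset (Fin n × Fin n)).Nonempty :=
    ⟨(⟨0, hn0⟩, ⟨0, hn0⟩), Finset.mem_univ _⟩
  set ε : ℝ := Finset.univ.inf' hne (fun p : Fin n × Fin n => (P ^ M) p.1 p.2) with hεdef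
  have hεpos : 0 < ε := by
    rw [hεdef, Finset.lt_inf'_iff]
    intro p _
    exact hQpos p.1 p.2
  have hεle : ∀ j i, ε ≤ (P ^ M) j i := fun j i =>
    Finset.inf'_le _ (Finset.mem_univ (j, i))
  set θ : ℝ := 1 - n * ε with hθdef
  have hθlt : θ < 1 := by
    rw [hθdef]
    nlinarith
  have hθnn : 0 ≤ θ := by
    have i0 : Fin n := ⟨0, hn0⟩
    have : (n : ℝ) * ε = ∑ _j : Fin n, ε := by
      rw [Finset.sum_const, Finset.card_univ, Fintype.card_fin, nsmul_eq_mul]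
    have h1 : (n:ℝ) * ε ≤ ∑ j, (P ^ M) j i0 := by
      rw [this]
      exact Finset.sum_le_sum fun j _ => hεle j i0
    rw [hθdef, sub_nonneg, ← hQ.2 i0]
    exact h1
  -- the residual vector w
  set a : ℝ := (∑ l, y0 l) / n with hadef
  set w : ℕ → Fin n → ℝ := fun k => y k - a • z k with hwdef
  have hwapp : ∀ k j, w k j = y k j - a * z k j := fun k j => rfl
  have hw : ∀ k, w (k + 1) = P.mulVec (w k) := by
    intro k
    rw [hwdef]
    simp only
    rw [hy k, hz k, Matrix.mulVec_sub, Matrix.mulVec_smul]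
  have hwsum : ∀ k, ∑ j, w k j = 0 := by
    intro k
    induction k with
    | zero =>
        simp only [hwapp]
        rw [Finset.sum_sub_distrib]
        have : ∑ j, a * z 0 j = a * n := by
          rw [← Finset.mul_sum, hzsum 0]
        rw [this, hy0, hadef]
        field_simp
        ring
    | succ k ih => rw [hw k, sum_mulVec_colStoch hP, ih]
  -- ℓ¹ norm of w
  set W : ℕ → ℝ := fun k => ∑ j, |w k j| with hWdef
  have hWnn : ∀ k, 0 ≤ W k := fun k => Finset.sum_nonneg fun j _ => abs_nonneg _
  have hWstep : ∀ k, W (k + 1) ≤ W k := by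
    intro k
    rw [hWdef]
    simp only
    rw [hw k]
    exact norm1_mulVec_le hP (w k)
  have hWmono : ∀ k l, k ≤ l → W l ≤ W k := by
    intro k l hkl
    induction l with
    | zero => rw [Nat.le_zero.mp hkl]
    | succ l ih =>
        rcases Nat.lt_or_ge k (l + 1) with h | h
        · exact le_trans (hWstep l) (ih (Nat.lt_succ_iff.mp h))
        · rw [le_antisymm hkl h]
  have hWM : ∀ k, W (k + M) ≤ θ * W k := by
    intro k
    have h1 : w (k + M) = (P ^ M).mulVec (w k) := evolve_pow hw M k
    rw [hWdef]
    simp only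
    rw [h1]
    exact norm1_mulVec_contract hQ hεle (w k) (hwsum k)
  have hWgeo : ∀ q, W (q * M) ≤ θ ^ q * W 0 := by
    intro q
    induction q with
    | zero => simp
    | succ q ih =>
        have : (q + 1) * M = q * M + M := by ring
        rw [this]
        calc W (q * M + M) ≤ θ * W (q * M) := hWM (q * M)
          _ ≤ θ * (θ ^ q * W 0) := by
              exact mul_le_mul_of_nonneg_left ih hθnn
          _ = θ ^ (q + 1) * W 0 := by ring
  have hWbound : ∀ k, W k ≤ θ ^ (k / M) * W 0 := by
    intro k
    calc W k ≤ W ((k / M) * M) := hWmono _ _ (Nat.div_mul_le_self k M)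
      _ ≤ θ ^ (k / M) * W 0 := hWgeo (k / M)
  -- W tends to 0
  have hdivtop : Tendsto (fun k : ℕ => k / M) atTop atTop := by
    refine tendsto_atTop_atTop.2 fun b => ⟨b * M, fun c hc => ?_⟩
    exact (Nat.le_div_iff_mul_le hM1).2 hc
  have hpow0 : Tendsto (fun k : ℕ => θ ^ (k / M) * W 0) atTop (nhds 0) := by
    have h1 : Tendsto (fun q : ℕ => θ ^ q) atTop (nhds 0) :=
      tendsto_pow_atTop_nhds_zero_of_lt_one hθnn hθlt
    have h2 : Tendsto (fun k : ℕ => θ ^ (k / M)) atTop (nhds 0) := h1.comp hdivtop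
    simpa using h2.mul_const (W 0)
  have hW0 : Tendsto W atTop (nhds 0) :=
    squeeze_zero hWnn hWbound hpow0
  -- lower bound on z for k ≥ M
  have hzbnd : ∀ j k, M ≤ k → ε * n ≤ z k j := by
    intro j k hk
    have h1 : z k = (P ^ M).mulVec (z (k - M)) := by
      calc z k = z ((k - M) + M) := by rw [Nat.sub_add_cancel hk]
        _ = (P ^ M).mulVec (z (k - M)) := evolve_pow hz M (k - M)
    rw [h1]
    have h2 : ∑ i, ε * z (k - M) i ≤ ∑ i, (P ^ M) j i * z (k - M) i :=
      Finset.sum_le_sum fun i _ =>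
        mul_le_mul_of_nonneg_right (hεle j i) (hzpos (k - M) i).le
    calc ε * n = ∑ i, ε * z (k - M) i := by
          rw [← Finset.mul_sum, hzsum (k - M)]
      _ ≤ ∑ i, (P ^ M) j i * z (k - M) i := h2
      _ = (P ^ M).mulVec (z (k - M)) j := rfl
  -- convergence of the ratio
  intro j
  have hratio : ∀ k, y k j / z k j = w k j / z k j + a := by
    intro k
    have hzne : z k j ≠ 0 := (hzpos k j).ne'
    rw [hwapp]
    field_simp
    ring
  have hquot0 : Tendsto (fun k => w k j / z k j) atTop (nhds 0) := by
    apply squeeze_zero_norm' (a := fun k => W k / (ε * n))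
    · filter_upwards [eventually_ge_atTop M] with k hk
      have hz1 : ε * n ≤ z k j := hzbnd j k hk
      have hz2 : 0 < ε * n := mul_pos hεpos hnR
      have hw1 : |w k j| ≤ W k :=
        Finset.single_le_sum (f := fun i => |w k i|) (fun i _ => abs_nonneg _)
          (Finset.mem_univ j)
      rw [Real.norm_eq_abs, abs_div, abs_of_pos (hzpos k j)]
      exact div_le_div₀ (hWnn k) hw1 hz2 hz1
    · simpa using hW0.div_const (ε * n)
  have : Tendsto (fun k => w k j / z k j + a) atTop (nhds (0 + a)) :=
    hquot0.add tendsto_const_nhds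
  rw [zero_add] at this
  have heq : (fun k => y k j / z k j) = fun k => w k j / z k j + a := funext hratio
  rw [heq]
  exact this
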